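/- Let 𝒪 be the ring of integers of an imaginary quadratic field, V_0 a closed fundamental domain for translation by 𝒪 with interior U_0, and M = {c ∈ 𝒪 : c + V_0 ⊄ U_0^{-1}}. Then every α ∈ ℂ can be expressed in at most one way as a convergent infinite continued fraction α = [c_1, c_2, c_3, …] with c_i ∈ 𝒪 for all i and c_i ∉ M for all i > 1. -/

import Mathlib

open Filter Topology

/-- Finite continued fraction of a list of complex numbers. -/
noncomputable def cfC : List ℂ → ℂ
  | [] => 0
  | [c] => c
  | c :: l => c + (cfC l)⁻¹

namespace CFAux

/-- Evaluate the chain `a₁ + 1/(a₂ + 1/(⋯ + 1/z))`. -/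
noncomputable def chainEval : List ℂ → ℂ → ℂ
  | [], z => z
  | x :: l, z => x + (chainEval l z)⁻¹

@[simp] lemma chainEval_nil (z : ℂ) : chainEval [] z = z := rfl

@[simp] lemma chainEval_cons (x : ℂ) (l : List ℂ) (z : ℂ) :
    chainEval (x :: l) z = x + (chainEval l z)⁻¹ := rfl

lemma cfC_cons (x : ℂ) (m : List ℂ) (h : m ≠ []) : cfC (x :: m) = x + (cfC m)⁻¹ := by
  cases m with
  | nil => exact absurd rfl h
  | cons y l => rfl

lemma cfC_concat (l : List ℂ) (z : ℂ) : cfC (l ++ [z]) = chainEval l z := by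
  induction l with
  | nil => simp [cfC]
  | cons x l ih =>
      have hne : l ++ [z] ≠ [] := by simp
      rw [List.cons_append, cfC_cons x (l ++ [z]) hne, ih, chainEval_cons]

lemma chainEval_append (l₁ l₂ : List ℂ) (z : ℂ) :
    chainEval (l₁ ++ l₂) z = chainEval l₁ (chainEval l₂ z) := by
  induction l₁ with
  | nil => simp
  | cons x l ih => simp [ih]

/-- Continuant matrix `((p, p'), (q, q'))` of a list. -/
noncomputable def mquad : List ℂ → (ℂ × ℂ) × (ℂ × ℂ)
  | [] => ((1, 0), (0, 1))
  | x :: l =>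
      ((x * (mquad l).1.1 + (mquad l).2.1, x * (mquad l).1.2 + (mquad l).2.2),
       ((mquad l).1.1, (mquad l).1.2))

lemma mquad_det (l : List ℂ) :
    (mquad l).1.1 * (mquad l).2.2 - (mquad l).1.2 * (mquad l).2.1 = (-1) ^ l.length := by
  induction l with
  | nil => simp [mquad]
  | cons x l ih =>
      simp only [mquad, List.length_cons, pow_succ]
      ring_nf
      ring_nf at ih
      linear_combination (-1 : ℂ) * ih

lemma mquad_concat (l : List ℂ) (x : ℂ) :
    mquad (l ++ [x]) =
      (((mquad l).1.1 * x + (mquad l).1.2, (mquad l).1.1),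
       ((mquad l).2.1 * x + (mquad l).2.2, (mquad l).2.1)) := by
  induction l with
  | nil =>
      simp only [List.nil_append, mquad, Prod.mk.injEq]
      refine ⟨⟨by ring, by ring⟩, by ring, trivial⟩
  | cons y l ih =>
      simp only [List.cons_append, mquad, List.append_eq, ih, Prod.mk.injEq]
      exact ⟨⟨by ring, trivial⟩, trivial⟩

/-- All proper tail values (and the seed) are nonzero. -/
def zeroFree : List ℂ → ℂ → Prop
  | [], z => z ≠ 0
  | _ :: l, z => chainEval l z ≠ 0 ∧ zeroFree l z

lemma chainEval_formula (l : List ℂ) (z : ℂ) (h : zeroFree l z) :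
    (mquad l).2.1 * z + (mquad l).2.2 ≠ 0 ∧
    chainEval l z = ((mquad l).1.1 * z + (mquad l).1.2) / ((mquad l).2.1 * z + (mquad l).2.2) := by
  induction l with
  | nil =>
      simp [mquad]
  | cons x l ih =>
      obtain ⟨hval, htail⟩ := h
      obtain ⟨hD, hE⟩ := ih htail
      set p := (mquad l).1.1
      set p' := (mquad l).1.2
      set q := (mquad l).2.1
      set q' := (mquad l).2.2
      have hN : p * z + p' ≠ 0 := by
        intro h0
        apply hval
        rw [hE, h0, zero_div]
      constructor
      · simpa [mquad] using hN
      · rw [chainEval_cons, hE]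
        simp only [mquad]
        rw [inv_div]
        simp only [p, p', q, q'] at hN ⊢
        rw [eq_div_iff hN, add_mul, div_mul_cancel₀ _ hN]
        ring


/-- `[a j, a (j+1), …, a (n-1)]`. -/
noncomputable def seg (a : ℕ → ℂ) (j n : ℕ) : List ℂ :=
  List.ofFn (fun i : Fin (n - j) => a (j + i))

/-- tail value `[a j; a (j+1), …, a n]`. -/
noncomputable def tl (a : ℕ → ℂ) (j n : ℕ) : ℂ := chainEval (seg a j n) (a n)

lemma ofFn_shift_succ (a : ℕ → ℂ) (j m : ℕ) :
    List.ofFn (fun i : Fin (m+1) => a (j + i)) =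
      a j :: List.ofFn (fun i : Fin m => a (j + 1 + i)) := by
  rw [List.ofFn_succ]
  have h1 : (fun i : Fin m => a (j + ((i : ℕ) + 1))) = fun i : Fin m => a (j + 1 + (i : ℕ)) := by
    funext i
    congr 1
    omega
  simp only [Fin.val_succ, Fin.val_zero, Nat.add_zero, h1]

lemma ofFn_shift_concat (a : ℕ → ℂ) (j m : ℕ) :
    List.ofFn (fun i : Fin (m+1) => a (j + i)) =
      List.ofFn (fun i : Fin m => a (j + i)) ++ [a (j + m)] := by
  rw [List.ofFn_succ']
  simp [List.concat_eq_append]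

@[simp] lemma seg_self (a : ℕ → ℂ) (n : ℕ) : seg a n n = [] := by
  simp [seg]

lemma seg_cons (a : ℕ → ℂ) {j n : ℕ} (h : j < n) :
    seg a j n = a j :: seg a (j+1) n := by
  unfold seg
  rw [show n - j = (n - (j+1)) + 1 by omega]
  exact ofFn_shift_succ a j (n - (j+1))

lemma seg_concat (a : ℕ → ℂ) {j n : ℕ} (h : j ≤ n) :
    seg a j (n+1) = seg a j n ++ [a n] := by
  unfold seg
  rw [show (n+1) - j = (n - j) + 1 by omega]
  rw [ofFn_shift_concat a j (n - j), show j + (n - j) = n from by omega]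

lemma seg_append (a : ℕ → ℂ) {j k n : ℕ} (hjk : j ≤ k) (hkn : k ≤ n) :
    seg a j n = seg a j k ++ seg a k n := by
  induction n, hkn using Nat.le_induction with
  | base => simp
  | succ n hkn ih =>
      rw [seg_concat a (le_trans hjk hkn), seg_concat a hkn, ih, List.append_assoc]

@[simp] lemma tl_self (a : ℕ → ℂ) (n : ℕ) : tl a n n = a n := by simp [tl]

lemma tl_cons (a : ℕ → ℂ) {j n : ℕ} (h : j < n) :
    tl a j n = a j + (tl a (j+1) n)⁻¹ := by
  unfold tl
  rw [seg_cons a h, chainEval_cons]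

lemma tl_split (a : ℕ → ℂ) {j k n : ℕ} (hjk : j ≤ k) (hkn : k ≤ n) :
    tl a j n = chainEval (seg a j k) (tl a k n) := by
  unfold tl
  rw [seg_append a hjk hkn, chainEval_append]

/-- inverse recursion, valid unconditionally. -/
lemma tl_succ_eq (a : ℕ → ℂ) {j n : ℕ} (h : j < n) :
    tl a (j+1) n = (tl a j n - a j)⁻¹ := by
  rw [tl_cons a h]
  simp


/-- All the data of the geometric situation. -/
structure Ctx where
  V0 : Set ℂ
  Oset : Set ℂ
  W : Set ℂ
  cpt : IsCompact V0
  nev : V0.Nonempty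
  OsetZero : (0:ℂ) ∈ Oset
  OsetSub : ∀ {x y : ℂ}, x ∈ Oset → y ∈ Oset → x - y ∈ Oset
  OsetAdd : ∀ {x y : ℂ}, x ∈ Oset → y ∈ Oset → x + y ∈ Oset
  OsetMul : ∀ {x y : ℂ}, x ∈ Oset → y ∈ Oset → x * y ∈ Oset
  OsetOne : (1:ℂ) ∈ Oset
  Wclosed : IsClosed W
  WsubU : W ⊆ interior V0
  hWpt : ∀ c, c ∈ Oset → (∀ v ∈ V0, (c + v)⁻¹ ∈ interior V0) →
      ∀ z, z - c ∈ V0 → z⁻¹ ∈ W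
  hdisjpt : ∀ c₁, c₁ ∈ Oset → ∀ c₂, c₂ ∈ Oset → c₁ ≠ c₂ →
      ∀ z, z - c₁ ∈ interior V0 → z - c₂ ∈ interior V0 → False
  m0 : ℝ
  m0pos : 0 < m0
  m0sep : ∀ x ∈ Oset, x ≠ 0 → m0 ≤ ‖x‖
  Rb : ℝ
  Rbpos : 0 ≤ Rb
  hRb : ∀ x ∈ V0, ‖x‖ ≤ Rb

namespace Ctx

variable (X : Ctx)

def Good (c : ℂ) : Prop := c ∈ X.Oset ∧ ∀ v ∈ X.V0, (c + v)⁻¹ ∈ interior X.V0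

lemma V0_ne_univ : X.V0 ≠ Set.univ := by
  intro h
  have hmem : ((X.Rb + 1 : ℝ) : ℂ) ∈ X.V0 := by rw [h]; trivial
  have hle := X.hRb _ hmem
  simp only [Complex.norm_real, Real.norm_eq_abs] at hle
  rw [abs_of_nonneg (by linarith [X.Rbpos])] at hle
  linarith [X.Rbpos]

/-- `0` is never a good partial quotient. -/
lemma zero_not_good : ¬ X.Good 0 := by
  rintro ⟨-, h⟩
  have hsub : X.V0 ⊆ interior X.V0 := by
    intro x hx
    have h1 : x⁻¹ ∈ interior X.V0 := by simpa using h x hx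
    have h2 : (x⁻¹)⁻¹ ∈ interior X.V0 := by
      simpa using h _ (interior_subset h1)
    simpa using h2
  have hopen : IsOpen X.V0 := by
    rw [show X.V0 = interior X.V0 from le_antisymm hsub interior_subset]
    exact isOpen_interior
  have hclopen : IsClopen X.V0 := ⟨X.cpt.isClosed, hopen⟩
  exact X.V0_ne_univ (hclopen.eq_univ X.nev)

lemma good_ne_zero {c : ℂ} (hc : X.Good c) : c ≠ 0 := by
  rintro rfl; exact X.zero_not_good hc

/-- For a good `g`, `-g` is not in the interior of `V0`. -/
lemma neg_good_not_interior {g : ℂ} (hg : X.Good g) : -g ∉ interior X.V0 := by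
  intro hmem
  obtain ⟨ε, hεpos, hball⟩ := Metric.isOpen_iff.1 isOpen_interior _ hmem
  set η : ℂ := Complex.ofReal (min (ε/2) (1/(X.Rb+1)))
  have hmin : (0:ℝ) < min (ε/2) (1/(X.Rb+1)) := by
    apply lt_min (by linarith)
    apply div_pos one_pos
    linarith [X.Rbpos]
  have hη0 : η ≠ 0 := by
    simp only [η, ne_eq, Complex.ofReal_eq_zero]
    exact ne_of_gt hmin
  have hηmem : -g + η ∈ interior X.V0 := by
    apply hball
    simp only [Metric.mem_ball, dist_eq_norm]
    have : ‖(-g + η) - (-g)‖ = ‖η‖ := by ring_nf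
    rw [show (-g + η) - (-g) = η by ring]
    simp only [η, Complex.norm_real, Real.norm_eq_abs, abs_of_pos hmin]
    calc min (ε/2) (1/(X.Rb+1)) ≤ ε/2 := min_le_left _ _
    _ < ε := by linarith
  have hgood : (g + (-g + η))⁻¹ ∈ interior X.V0 := hg.2 _ (interior_subset hηmem)
  have : (g + (-g + η)) = η := by ring
  rw [this] at hgood
  have hnorm : ‖η⁻¹‖ ≤ X.Rb := X.hRb _ (interior_subset hgood)
  rw [norm_inv] at hnorm
  have hηnorm : ‖η‖ ≤ 1/(X.Rb+1) := by
    simp only [η, Complex.norm_real, Real.norm_eq_abs, abs_of_pos hmin]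
    exact min_le_right _ _
  have hpos : (0:ℝ) < ‖η‖ := norm_pos_iff.2 hη0
  have h1 : (X.Rb+1) ≤ ‖η‖⁻¹ := by
    rw [le_inv_comm₀ (by linarith [X.Rbpos]) hpos]
    calc ‖η‖ ≤ 1/(X.Rb+1) := hηnorm
    _ = (X.Rb+1)⁻¹ := one_div _
  linarith [X.Rbpos]

lemma good_translate_ne_zero {g z : ℂ} (h0 : (0:ℂ) ∉ X.V0) (hg : X.Good g)
    (hz : z - g ∈ X.V0) : z ≠ 0 := by
  rintro rfl
  have h1 : (g + (0 - g))⁻¹ ∈ interior X.V0 := hg.2 _ hz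
  rw [show g + (0 - g) = 0 by ring, inv_zero] at h1
  exact h0 (interior_subset h1)

/-- Trapped chains stay trapped; inverses are in `W`. -/
lemma trap (l : List ℂ) (z : ℂ) (hl : ∀ x ∈ l, X.Good x)
    (hz : ∃ g, X.Good g ∧ z - g ∈ X.V0) :
    (chainEval l z)⁻¹ ∈ X.W ∧ ∃ g, X.Good g ∧ chainEval l z - g ∈ X.V0 := by
  induction l with
  | nil =>
      obtain ⟨g, hg, hzg⟩ := hz
      exact ⟨X.hWpt g hg.1 hg.2 z hzg, g, hg, hzg⟩
  | cons x l ih =>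
      have hgx : X.Good x := hl x List.mem_cons_self
      obtain ⟨hinv, -⟩ := ih (fun y hy => hl y (List.mem_cons_of_mem _ hy))
      have hmem : chainEval (x :: l) z - x ∈ X.V0 := by
        rw [chainEval_cons]
        simpa using interior_subset (X.WsubU hinv)
      exact ⟨X.hWpt x hgx.1 hgx.2 _ hmem, x, hgx, hmem⟩

lemma trap_ne (h0 : (0:ℂ) ∉ X.V0) (l : List ℂ) (z : ℂ) (hl : ∀ x ∈ l, X.Good x)
    (hz : ∃ g, X.Good g ∧ z - g ∈ X.V0) : chainEval l z ≠ 0 := by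
  obtain ⟨-, g, hg, hmem⟩ := X.trap l z hl hz
  exact X.good_translate_ne_zero h0 hg hmem

/-- bounded subsets of the lattice are finite. -/
lemma finite_latt (C : ℝ) : {x : ℂ | x ∈ X.Oset ∧ ‖x‖ ≤ C}.Finite := by
  by_contra hinf
  have hinf' : {x : ℂ | x ∈ X.Oset ∧ ‖x‖ ≤ C}.Infinite := hinf
  set S := {x : ℂ | x ∈ X.Oset ∧ ‖x‖ ≤ C}
  have hemb := hinf'.natEmbedding
  set u : ℕ → ℂ := fun n => (hemb n : ℂ)
  have huS : ∀ n, u n ∈ S := fun n => (hemb n).2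
  have hball : ∀ n, u n ∈ Metric.closedBall (0:ℂ) C := by
    intro n
    simp only [Metric.mem_closedBall, dist_zero_right]
    exact (huS n).2
  obtain ⟨L, -, φ, hφ, hconv⟩ :=
    (isCompact_closedBall (0:ℂ) C).tendsto_subseq hball
  have hcauchy : ∀ᶠ n in atTop, dist (u (φ n)) L < X.m0/2 := by
    have := Metric.tendsto_atTop.1 hconv (X.m0/2) (by linarith [X.m0pos])
    obtain ⟨N, hN⟩ := this
    exact eventually_atTop.2 ⟨N, hN⟩
  obtain ⟨N, hN⟩ := eventually_atTop.1 hcauchy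
  have h1 := hN N le_rfl
  have h2 := hN (N+1) (by omega)
  have hne : u (φ N) ≠ u (φ (N+1)) := by
    intro h
    have heq : φ N = φ (N+1) := hemb.injective (Subtype.ext h)
    have := hφ (show N < N + 1 by omega)
    omega

  have hdist : dist (u (φ N)) (u (φ (N+1))) < X.m0 := by
    calc dist (u (φ N)) (u (φ (N+1))) ≤ dist (u (φ N)) L + dist (u (φ (N+1))) L :=
          dist_triangle_right _ _ _
    _ < X.m0/2 + X.m0/2 := by linarith
    _ = X.m0 := by ring
  have hdiff : u (φ N) - u (φ (N+1)) ∈ X.Oset :=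
    X.OsetSub (huS (φ N)).1 (huS (φ (N+1))).1
  have hd0 : u (φ N) - u (φ (N+1)) ≠ 0 := sub_ne_zero.2 hne
  have := X.m0sep _ hdiff hd0
  rw [dist_eq_norm] at hdist
  linarith

end Ctx
end CFAux

namespace CFAux2
open CFAux CFAux.Ctx

lemma mem_seg {a : ℕ → ℂ} {j n : ℕ} {x : ℂ} (hx : x ∈ seg a j n) :
    ∃ i, j ≤ i ∧ i < n ∧ x = a i := by
  rw [seg, List.mem_ofFn] at hx
  obtain ⟨i, hi⟩ := hx
  have := i.isLt
  exact ⟨j + i, by omega, by omega, hi.symm⟩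

lemma cfC_ofFn (a : ℕ → ℂ) (n : ℕ) :
    cfC (List.ofFn fun i : Fin (n+1) => a i) = tl a 0 n := by
  have h1 : (List.ofFn fun i : Fin (n+1) => a i) = seg a 0 n ++ [a n] := by
    have h2 := ofFn_shift_concat a 0 n
    simpa [seg] using h2
  rw [h1, cfC_concat]
  rfl

lemma zeroFree_seg (a : ℕ → ℂ) (z : ℂ) (n : ℕ) :
    ∀ d j, n - j = d → j ≤ n →
      (∀ i, j < i → i ≤ n → chainEval (seg a i n) z ≠ 0) → z ≠ 0 →
      zeroFree (seg a j n) z := by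
  intro d
  induction d with
  | zero =>
      intro j hd hj _ hz
      have : j = n := by omega
      subst this
      simpa [zeroFree] using hz
  | succ d ih =>
      intro j hd hj hs hz
      have hjn : j < n := by omega
      rw [seg_cons a hjn]
      show chainEval (seg a (j+1) n) z ≠ 0 ∧ zeroFree (seg a (j+1) n) z
      refine ⟨hs (j+1) (by omega) (by omega), ?_⟩
      exact ih (j+1) (by omega) (by omega) (fun i h1 h2 => hs i (by omega) h2) hz

lemma mquad_mem (X : Ctx) (l : List ℂ) (hl : ∀ x ∈ l, x ∈ X.Oset) :
    (mquad l).1.1 ∈ X.Oset ∧ (mquad l).1.2 ∈ X.Oset ∧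
    (mquad l).2.1 ∈ X.Oset ∧ (mquad l).2.2 ∈ X.Oset := by
  induction l with
  | nil => exact ⟨X.OsetOne, X.OsetZero, X.OsetZero, X.OsetOne⟩
  | cons x l ih =>
      obtain ⟨h1, h2, h3, h4⟩ := ih (fun y hy => hl y (List.mem_cons_of_mem _ hy))
      have hx := hl x List.mem_cons_self
      exact ⟨X.OsetAdd (X.OsetMul hx h1) h3, X.OsetAdd (X.OsetMul hx h2) h4, h1, h2⟩

lemma mquad_det_norm (l : List ℂ) :
    ‖(mquad l).1.1 * (mquad l).2.2 - (mquad l).1.2 * (mquad l).2.1‖ = 1 := by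
  rw [mquad_det]
  simp

lemma stag (X : Ctx) (a : ℕ → ℂ) (hgood : ∀ i, 1 ≤ i → X.Good (a i)) {j n : ℕ}
    (hj : 1 ≤ j) (hn : j ≤ n) (heq : tl a j n = tl a j (n+1)) : False := by
  have key : ∀ k, j + k ≤ n → tl a (j+k) n = tl a (j+k) (n+1) := by
    intro k
    induction k with
    | zero => intro _; simpa using heq
    | succ k ih =>
        intro hk
        have h1 : j + k < n := by omega
        rw [show j + (k+1) = (j+k)+1 by omega, tl_succ_eq a h1,
            tl_succ_eq a (show j + k < n+1 by omega), ih (by omega)]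
  have hlast := key (n - j) (by omega)
  rw [show j + (n - j) = n by omega, tl_self, tl_cons a (show n < n+1 by omega), tl_self] at hlast
  have h2 : (a (n+1))⁻¹ = 0 := by
    have := hlast
    rw [left_eq_add] at this
    exact this
  have h3 : a (n+1) = 0 := inv_eq_zero.1 h2
  exact X.zero_not_good (h3 ▸ hgood (n+1) (by omega))

lemma collapse (a : ℕ → ℂ) {j n : ℕ} (hj : 1 ≤ j) (hjn : j ≤ n) (hz : tl a j n = 0) :
    tl a 0 n = tl a 0 (j-1) := by
  obtain ⟨j', rfl⟩ : ∃ j', j = j' + 1 := ⟨j - 1, by omega⟩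
  simp only [Nat.add_sub_cancel]
  have h1 : tl a 0 n = chainEval (seg a 0 (j'+1)) (tl a (j'+1) n) :=
    tl_split a (by omega) hjn
  rw [hz, seg_concat a (Nat.zero_le j'), chainEval_append] at h1
  simpa [tl] using h1

lemma eventually_eq_limit {T : ℕ → ℂ} {β : ℂ} (hT : Filter.Tendsto T Filter.atTop (nhds β))
    {S : Set ℂ} (hS : S.Finite) (hmem : ∀ n, T n ∈ S) :
    ∀ᶠ n in Filter.atTop, T n = β := by
  have h1 : ∀ᶠ n in Filter.atTop, ∀ s ∈ S, s ≠ β → T n ≠ s := by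
    rw [Filter.eventually_all_finite hS]
    intro s hs
    rcases eq_or_ne s β with rfl | hne
    · exact Filter.Eventually.of_forall (fun n h => absurd rfl h)
    · have hd : 0 < dist s β := dist_pos.2 hne
      have h2 : ∀ᶠ n in Filter.atTop, dist (T n) β < dist s β := by
        obtain ⟨N, hN⟩ := Metric.tendsto_atTop.1 hT _ hd
        exact Filter.eventually_atTop.2 ⟨N, fun n hn => hN n hn⟩
      exact h2.mono (fun n hn _ h => by rw [h] at hn; exact lt_irrefl _ hn)
  exact h1.mono (fun n hn => by
    by_contra hne
    exact hn (T n) (hmem n) hne rfl)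

lemma zf_infinite (X : Ctx) (a : ℕ → ℂ) (hgood : ∀ i, 1 ≤ i → X.Good (a i)) {α : ℂ}
    (hconv : Filter.Tendsto (fun n => tl a 0 n) Filter.atTop (nhds α)) (N : ℕ) :
    ∃ n, N ≤ n ∧ 1 ≤ n ∧ ∀ j, 1 ≤ j → j ≤ n → tl a j n ≠ 0 := by
  by_contra hno
  push_neg at hno
  set N' := max N 1 with hN'
  have hzero : ∀ n, N' ≤ n → ∃ j, 1 ≤ j ∧ j ≤ n ∧ tl a j n = 0 := by
    intro n hn
    exact hno n (le_trans (le_max_left _ _) hn) (le_trans (le_max_right _ _) hn)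
  have hdesc : ∀ n, ∃ m, m < N' ∧ tl a 0 n = tl a 0 m := by
    intro n
    induction n using Nat.strong_induction_on with
    | _ n ih =>
      by_cases hn : n < N'
      · exact ⟨n, hn, rfl⟩
      · push_neg at hn
        obtain ⟨j, hj1, hjn, hz⟩ := hzero n hn
        have h4 : tl a 0 n = tl a 0 (j-1) := collapse a hj1 hjn hz
        obtain ⟨m, hm1, hm2⟩ := ih (j-1) (by omega)
        exact ⟨m, hm1, h4.trans hm2⟩
  have hSfin : ((fun m => tl a 0 m) '' {m | m < N'}).Finite :=
    Set.Finite.image _ (Set.finite_lt_nat N')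
  have hmem : ∀ n, tl a 0 n ∈ (fun m => tl a 0 m) '' {m | m < N'} := fun n => by
    obtain ⟨m, hm1, hm2⟩ := hdesc n
    exact ⟨m, hm1, hm2.symm⟩
  have hev := eventually_eq_limit hconv hSfin hmem
  obtain ⟨N₄, hN₄⟩ := Filter.eventually_atTop.1 hev
  have e1 : tl a 0 (max N₄ 1) = α := hN₄ _ (le_max_left _ _)
  have e2 : tl a 0 (max N₄ 1 + 1) = α :=
    hN₄ (max N₄ 1 + 1) (by have := le_max_left N₄ 1; omega)
  have hstep : tl a 1 (max N₄ 1) = tl a 1 (max N₄ 1 + 1) := by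
    have r1 : tl a 1 (max N₄ 1) = (tl a 0 (max N₄ 1) - a 0)⁻¹ :=
      tl_succ_eq a (by omega)
    have r2 : tl a 1 (max N₄ 1 + 1) = (tl a 0 (max N₄ 1 + 1) - a 0)⁻¹ :=
      tl_succ_eq a (by omega)
    rw [r1, r2, e1, e2]
  exact stag X a hgood (le_refl 1) (le_max_right N₄ 1) hstep

end CFAux2

namespace CFAux2
open CFAux CFAux.Ctx Filter Topology

theorem mainA (X : Ctx) (a : ℕ → ℂ) (f : ℂ) (hfO : f ∈ X.Oset) (hfV : -f ∈ X.V0)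
    (hf0 : f ≠ 0) (h0V : (0:ℂ) ∉ X.V0)
    (haO : ∀ i, a i ∈ X.Oset) (hgood : ∀ i, 1 ≤ i → X.Good (a i))
    (ℓ : ℕ) (φ : ℕ → ℕ) (hφ : StrictMono φ) (hφℓ : ∀ m, ℓ < φ m)
    (hzf : ∀ m, ∀ j, 1 ≤ j → j ≤ φ m → tl a j (φ m) ≠ 0)
    (β : ℂ) (hβ : Tendsto (fun m => tl a ℓ (φ m)) atTop (nhds β)) :
    β - a ℓ ∈ X.W := by
  by_contra hWc
  have segGood : ∀ i n, 1 ≤ i → ∀ x ∈ seg a i n, X.Good x := by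
    intro i n hi x hx
    obtain ⟨k, hk1, hk2, rfl⟩ := mem_seg hx
    exact hgood k (by omega)
  have segO : ∀ n, ∀ x ∈ seg a ℓ n, x ∈ X.Oset := by
    intro n x hx
    obtain ⟨k, _, _, rfl⟩ := mem_seg hx
    exact haO k
  have seedMem : ∀ n : ℕ, (a n - f) - a n ∈ X.V0 := by
    intro n
    rw [show a n - f - a n = -f by ring]
    exact hfV
  have seedNe : ∀ n, 1 ≤ n → a n - f ≠ 0 := fun n hn =>
    X.good_translate_ne_zero h0V (hgood n hn) (seedMem n)
  have pseudoW : ∀ n, ℓ < n → chainEval (seg a ℓ n) (a n - f) - a ℓ ∈ X.W := by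
    intro n hn
    have htrap := X.trap (seg a (ℓ+1) n) (a n - f) (segGood (ℓ+1) n (by omega))
      ⟨a n, hgood n (by omega), seedMem n⟩
    rw [seg_cons a hn, chainEval_cons]
    simpa using htrap.1
  have pseudoZF : ∀ n, ℓ < n → zeroFree (seg a ℓ n) (a n - f) := by
    intro n hn
    refine zeroFree_seg a _ n (n - ℓ) ℓ rfl (le_of_lt hn) ?_ (seedNe n (by omega))
    intro i hi hin
    exact X.trap_ne h0V (seg a i n) _ (segGood i n (by omega))
      ⟨a n, hgood n (by omega), seedMem n⟩
  have actualZF : ∀ m, zeroFree (seg a ℓ (φ m)) (a (φ m)) := by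
    intro m
    have hseed : a (φ m) ≠ 0 := by
      have h := hzf m (φ m) (by have := hφℓ m; omega) le_rfl
      simpa using h
    refine zeroFree_seg a _ (φ m) (φ m - ℓ) ℓ rfl (le_of_lt (hφℓ m)) ?_ hseed
    intro i hi hin
    exact hzf m i (by omega) hin
  -- separation
  have hWcpt : IsCompact X.W :=
    X.cpt.of_isClosed_subset X.Wclosed (X.WsubU.trans interior_subset)
  have hWtcpt : IsCompact ((fun w => a ℓ + w) '' X.W) := hWcpt.image (continuous_add_left _)
  have hβWt : β ∉ (fun w => a ℓ + w) '' X.W := by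
    rintro ⟨w, hw, he⟩
    apply hWc
    rw [← he]
    simpa using hw
  obtain ⟨ε, hεpos, hball⟩ :=
    Metric.isOpen_iff.1 hWtcpt.isClosed.isOpen_compl β hβWt
  have hsep : ∀ w ∈ (fun w => a ℓ + w) '' X.W, ε ≤ dist β w := by
    intro w hw
    by_contra hlt
    push_neg at hlt
    exact hball (show w ∈ Metric.ball β ε by rwa [Metric.mem_ball, dist_comm]) hw
  have hfnorm : (0:ℝ) < ‖f‖ := norm_pos_iff.2 hf0
  -- eventual closeness
  have hev : ∀ᶠ m in atTop, dist (tl a ℓ (φ m)) β < ε/2 := by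
    obtain ⟨N, hN⟩ := Metric.tendsto_atTop.1 hβ (ε/2) (by linarith)
    exact eventually_atTop.2 ⟨N, fun m hm => hN m hm⟩
  obtain ⟨M, hM⟩ := eventually_atTop.1 hev
  -- constants
  set C1 : ℝ := 2*‖f‖/(ε*X.m0) with hC1def
  set C2 : ℝ := (C1 + C1)/‖f‖ with hC2def
  set C3 : ℝ := (‖β‖ + ε) * C1 with hC3def
  set C4 : ℝ := (C3 + (‖a ℓ‖ + X.Rb) * C1)/‖f‖ with hC4def
  set C : ℝ := max (max C1 C2) (max C3 C4) with hCdef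
  have hC1C : C1 ≤ C := le_trans (le_max_left _ _) (le_max_left _ _)
  have hC2C : C2 ≤ C := le_trans (le_max_right _ _) (le_max_left _ _)
  have hC3C : C3 ≤ C := le_trans (le_max_left _ _) (le_max_right _ _)
  have hC4C : C4 ≤ C := le_trans (le_max_right _ _) (le_max_right _ _)
  -- the key per-depth estimates
  have key : ∀ m, M ≤ m →
      ((mquad (seg a ℓ (φ m + 1))).1.1 ∈ X.Oset ∧ ‖(mquad (seg a ℓ (φ m + 1))).1.1‖ ≤ C) ∧
      ((mquad (seg a ℓ (φ m + 1))).1.2 ∈ X.Oset ∧ ‖(mquad (seg a ℓ (φ m + 1))).1.2‖ ≤ C) ∧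
      ((mquad (seg a ℓ (φ m + 1))).2.1 ∈ X.Oset ∧ ‖(mquad (seg a ℓ (φ m + 1))).2.1‖ ≤ C) ∧
      ((mquad (seg a ℓ (φ m + 1))).2.2 ∈ X.Oset ∧ ‖(mquad (seg a ℓ (φ m + 1))).2.2‖ ≤ C) ∧
      (mquad (seg a ℓ (φ m + 1))).2.1 ≠ 0 ∧
      tl a ℓ (φ m) =
        (mquad (seg a ℓ (φ m + 1))).1.1 / (mquad (seg a ℓ (φ m + 1))).2.1 := by
    intro m hm
    have hℓn : ℓ < φ m := hφℓ m
    set n := φ m with hndef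
    set L : List ℂ := seg a ℓ (n + 1) with hLdef
    set p := (mquad L).1.1 with hpdef
    set p' := (mquad L).1.2 with hp'def
    set q := (mquad L).2.1 with hqdef
    set q' := (mquad L).2.2 with hq'def
    have hLrel : L = seg a ℓ n ++ [a n] := seg_concat a (le_of_lt hℓn)
    have hp : p = (mquad (seg a ℓ n)).1.1 * a n + (mquad (seg a ℓ n)).1.2 := by
      rw [hpdef, hLrel, mquad_concat]
    have hp' : p' = (mquad (seg a ℓ n)).1.1 := by
      rw [hp'def, hLrel, mquad_concat]
    have hq : q = (mquad (seg a ℓ n)).2.1 * a n + (mquad (seg a ℓ n)).2.2 := by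
      rw [hqdef, hLrel, mquad_concat]
    have hq' : q' = (mquad (seg a ℓ n)).2.1 := by
      rw [hq'def, hLrel, mquad_concat]
    -- formula for the actual value
    obtain ⟨hDT, hET⟩ := chainEval_formula (seg a ℓ n) (a n) (actualZF m)
    have hqne : q ≠ 0 := by rw [hq]; exact hDT
    have hTform : tl a ℓ n = p / q := by
      rw [hp, hq]; exact hET
    -- formula for the pseudo value
    obtain ⟨hDP, hEP⟩ := chainEval_formula (seg a ℓ n) (a n - f) (pseudoZF n hℓn)
    have hBne : q - f * q' ≠ 0 := by
      intro h
      apply hDP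
      rw [hq, hq'] at h
      linear_combination h
    have hPform : chainEval (seg a ℓ n) (a n - f) = (p - f * p') / (q - f * q') := by
      rw [hEP, hp, hp', hq, hq']
      congr 1 <;> ring
    -- determinant
    have hdet : ‖p * q' - p' * q‖ = 1 := mquad_det_norm L
    -- Oset memberships
    obtain ⟨hpO, hp'O, hqO, hq'O⟩ := mquad_mem X L (by
      intro x hx
      rw [hLdef] at hx
      exact segO (n+1) x hx)
    have hBO : q - f * q' ∈ X.Oset := X.OsetSub hqO (X.OsetMul hfO hq'O)
    -- separation: ε/2 ≤ ‖P - T‖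
    have hclose : dist (tl a ℓ n) β < ε/2 := hM m hm
    have hPw : chainEval (seg a ℓ n) (a n - f) - a ℓ ∈ X.W := pseudoW n hℓn
    have hPmem : chainEval (seg a ℓ n) (a n - f) ∈ (fun w => a ℓ + w) '' X.W :=
      ⟨_, hPw, by ring⟩
    have hPnorm : ‖chainEval (seg a ℓ n) (a n - f)‖ ≤ ‖a ℓ‖ + X.Rb := by
      have h1 : ‖chainEval (seg a ℓ n) (a n - f) - a ℓ‖ ≤ X.Rb :=
        X.hRb _ (interior_subset (X.WsubU hPw))
      calc ‖chainEval (seg a ℓ n) (a n - f)‖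
          = ‖a ℓ + (chainEval (seg a ℓ n) (a n - f) - a ℓ)‖ := by ring_nf
      _ ≤ ‖a ℓ‖ + ‖chainEval (seg a ℓ n) (a n - f) - a ℓ‖ := norm_add_le _ _
      _ ≤ ‖a ℓ‖ + X.Rb := by linarith
    have hs1 : ε/2 ≤ ‖chainEval (seg a ℓ n) (a n - f) - tl a ℓ n‖ := by
      have hd1 : ε ≤ dist β (chainEval (seg a ℓ n) (a n - f)) := hsep _ hPmem
      have tri : ‖β - chainEval (seg a ℓ n) (a n - f)‖ ≤
          ‖β - tl a ℓ n‖ + ‖tl a ℓ n - chainEval (seg a ℓ n) (a n - f)‖ := by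
        calc ‖β - chainEval (seg a ℓ n) (a n - f)‖
            = ‖(β - tl a ℓ n) + (tl a ℓ n - chainEval (seg a ℓ n) (a n - f))‖ := by ring_nf
        _ ≤ _ := norm_add_le _ _
      rw [dist_eq_norm] at hd1 hclose
      have e2 : ‖β - tl a ℓ n‖ = ‖tl a ℓ n - β‖ := norm_sub_rev _ _
      have e3 : ‖tl a ℓ n - chainEval (seg a ℓ n) (a n - f)‖ =
          ‖chainEval (seg a ℓ n) (a n - f) - tl a ℓ n‖ := norm_sub_rev _ _
      rw [e2, e3] at tri
      linarith
    -- the determinant identity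
    have eq1 : (chainEval (seg a ℓ n) (a n - f) - tl a ℓ n) * ((q - f * q') * q) =
        f * (p * q' - p' * q) := by
      rw [hPform, hTform]
      field_simp
      ring
    have h1 : ‖chainEval (seg a ℓ n) (a n - f) - tl a ℓ n‖ * (‖q - f * q'‖ * ‖q‖) = ‖f‖ := by
      have h2 : ‖(chainEval (seg a ℓ n) (a n - f) - tl a ℓ n) * ((q - f * q') * q)‖ = ‖f‖ := by
        rw [eq1, norm_mul, hdet, mul_one]
      rw [norm_mul, norm_mul] at h2
      exact h2
    -- norm bounds
    have hqm0 : X.m0 ≤ ‖q‖ := X.m0sep q hqO hqne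
    have hBm0 : X.m0 ≤ ‖q - f * q'‖ := X.m0sep _ hBO hBne
    have hBq_raw : ‖q - f * q'‖ * ‖q‖ * ε ≤ 2 * ‖f‖ := by
      have step := mul_le_mul_of_nonneg_right hs1
        (mul_nonneg (norm_nonneg (q - f * q')) (norm_nonneg q))
      nlinarith [h1, step]
    have hq_le : ‖q‖ ≤ C1 := by
      rw [hC1def, le_div_iff₀ (mul_pos hεpos X.m0pos)]
      nlinarith [hBq_raw, mul_le_mul_of_nonneg_right hBm0
        (mul_nonneg (norm_nonneg q) (le_of_lt hεpos)), X.m0pos, norm_nonneg q]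
    have hB_le : ‖q - f * q'‖ ≤ C1 := by
      rw [hC1def, le_div_iff₀ (mul_pos hεpos X.m0pos)]
      nlinarith [hBq_raw, mul_le_mul_of_nonneg_right hqm0
        (mul_nonneg (norm_nonneg (q - f * q')) (le_of_lt hεpos)), X.m0pos,
        norm_nonneg (q - f * q')]
    have hq'_le : ‖q'‖ ≤ C2 := by
      have e4 : q' * f = q - (q - f * q') := by ring
      have e5 : ‖q'‖ * ‖f‖ ≤ C1 + C1 := by
        rw [← norm_mul, e4]
        calc ‖q - (q - f * q')‖ ≤ ‖q‖ + ‖q - f * q'‖ := norm_sub_le _ _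
        _ ≤ C1 + C1 := by linarith
      rw [hC2def, le_div_iff₀ hfnorm]
      exact e5
    have hT_le : ‖tl a ℓ n‖ ≤ ‖β‖ + ε := by
      rw [dist_eq_norm] at hclose
      calc ‖tl a ℓ n‖ = ‖(tl a ℓ n - β) + β‖ := by ring_nf
      _ ≤ ‖tl a ℓ n - β‖ + ‖β‖ := norm_add_le _ _
      _ ≤ ‖β‖ + ε := by linarith
    have hp_eq : p = tl a ℓ n * q := by
      rw [hTform, div_mul_cancel₀ _ hqne]
    have hp_le : ‖p‖ ≤ C3 := by
      rw [hp_eq, norm_mul, hC3def]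
      exact mul_le_mul hT_le hq_le (norm_nonneg q) (by linarith [norm_nonneg β])
    have hA_eq : p - f * p' = chainEval (seg a ℓ n) (a n - f) * (q - f * q') := by
      rw [hPform, div_mul_cancel₀ _ hBne]
    have hA_le : ‖p - f * p'‖ ≤ (‖a ℓ‖ + X.Rb) * C1 := by
      rw [hA_eq, norm_mul]
      exact mul_le_mul hPnorm hB_le (norm_nonneg _)
        (by linarith [norm_nonneg (a ℓ), X.Rbpos])
    have hp'_le : ‖p'‖ ≤ C4 := by
      have e4 : p' * f = p - (p - f * p') := by ring
      have e5 : ‖p'‖ * ‖f‖ ≤ C3 + (‖a ℓ‖ + X.Rb) * C1 := by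
        rw [← norm_mul, e4]
        calc ‖p - (p - f * p')‖ ≤ ‖p‖ + ‖p - f * p'‖ := norm_sub_le _ _
        _ ≤ _ := by linarith
      rw [hC4def, le_div_iff₀ hfnorm]
      exact e5
    exact ⟨⟨hpO, le_trans hp_le hC3C⟩, ⟨hp'O, le_trans hp'_le hC4C⟩,
      ⟨hqO, le_trans hq_le hC1C⟩, ⟨hq'O, le_trans hq'_le hC2C⟩, hqne, hTform⟩
  -- pigeonhole
  have hSfin : {x : ℂ | x ∈ X.Oset ∧ ‖x‖ ≤ C}.Finite := X.finite_latt C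
  have hfin4 : ({x : ℂ | x ∈ X.Oset ∧ ‖x‖ ≤ C} ×ˢ
      ({x : ℂ | x ∈ X.Oset ∧ ‖x‖ ≤ C} ×ˢ
        ({x : ℂ | x ∈ X.Oset ∧ ‖x‖ ≤ C} ×ˢ {x : ℂ | x ∈ X.Oset ∧ ‖x‖ ≤ C}))).Finite :=
    hSfin.prod (hSfin.prod (hSfin.prod hSfin))
  have hmaps : Set.MapsTo
      (fun m => ((mquad (seg a ℓ (φ m + 1))).1.1, (mquad (seg a ℓ (φ m + 1))).1.2,
        (mquad (seg a ℓ (φ m + 1))).2.1, (mquad (seg a ℓ (φ m + 1))).2.2))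
      (Set.Ici M)
      ({x : ℂ | x ∈ X.Oset ∧ ‖x‖ ≤ C} ×ˢ
        ({x : ℂ | x ∈ X.Oset ∧ ‖x‖ ≤ C} ×ˢ
          ({x : ℂ | x ∈ X.Oset ∧ ‖x‖ ≤ C} ×ˢ {x : ℂ | x ∈ X.Oset ∧ ‖x‖ ≤ C}))) := by
    intro m hm
    obtain ⟨h1, h2, h3, h4, -, -⟩ := key m hm
    exact ⟨h1, h2, h3, h4⟩
  obtain ⟨m1, hm1, m2, hm2, hne, hFeq⟩ :=
    Set.Infinite.exists_ne_map_eq_of_mapsTo (Set.Ici_infinite M) hmaps hfin4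
  -- final contradiction
  have final : ∀ m1 m2, M ≤ m1 → M ≤ m2 → m1 < m2 →
      ((mquad (seg a ℓ (φ m1 + 1))).1.1, (mquad (seg a ℓ (φ m1 + 1))).1.2,
        (mquad (seg a ℓ (φ m1 + 1))).2.1, (mquad (seg a ℓ (φ m1 + 1))).2.2) =
      ((mquad (seg a ℓ (φ m2 + 1))).1.1, (mquad (seg a ℓ (φ m2 + 1))).1.2,
        (mquad (seg a ℓ (φ m2 + 1))).2.1, (mquad (seg a ℓ (φ m2 + 1))).2.2) → False := by
    intro m1 m2 hm1 hm2 hlt hFeq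
    have hn12 : φ m1 < φ m2 := hφ hlt
    have hℓn1 : ℓ < φ m1 := hφℓ m1
    obtain ⟨hq1, hq2, hq3, hq4⟩ : (mquad (seg a ℓ (φ m1 + 1))).1.1 = (mquad (seg a ℓ (φ m2 + 1))).1.1 ∧
        (mquad (seg a ℓ (φ m1 + 1))).1.2 = (mquad (seg a ℓ (φ m2 + 1))).1.2 ∧
        (mquad (seg a ℓ (φ m1 + 1))).2.1 = (mquad (seg a ℓ (φ m2 + 1))).2.1 ∧
        (mquad (seg a ℓ (φ m1 + 1))).2.2 = (mquad (seg a ℓ (φ m2 + 1))).2.2 := by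
      simpa [Prod.ext_iff] using hFeq
    obtain ⟨-, -, -, -, hqne2, hT2⟩ := key m2 hm2
    -- the tail value
    have hsplit : tl a ℓ (φ m2) =
        chainEval (seg a ℓ (φ m1 + 1)) (tl a (φ m1 + 1) (φ m2)) :=
      tl_split a (by omega) (by omega)
    have hseedτ : tl a (φ m1 + 1) (φ m2) ≠ 0 := hzf m2 (φ m1 + 1) (by omega) (by omega)
    have hzfτ : zeroFree (seg a ℓ (φ m1 + 1)) (tl a (φ m1 + 1) (φ m2)) := by
      refine zeroFree_seg a _ (φ m1 + 1) ((φ m1 + 1) - ℓ) ℓ rfl (by omega) ?_ hseedτ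
      intro i hi hin
      have he : chainEval (seg a i (φ m1 + 1)) (tl a (φ m1 + 1) (φ m2)) = tl a i (φ m2) :=
        (tl_split a (by omega) (by omega)).symm
      rw [he]
      exact hzf m2 i (by omega) (by omega)
    obtain ⟨hDτ, hEτ⟩ := chainEval_formula (seg a ℓ (φ m1 + 1)) _ hzfτ
    -- two expressions for the same value
    have hv1 : tl a ℓ (φ m2) =
        ((mquad (seg a ℓ (φ m1 + 1))).1.1 * tl a (φ m1 + 1) (φ m2) +
          (mquad (seg a ℓ (φ m1 + 1))).1.2) /
        ((mquad (seg a ℓ (φ m1 + 1))).2.1 * tl a (φ m1 + 1) (φ m2) +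
          (mquad (seg a ℓ (φ m1 + 1))).2.2) := by
      rw [hsplit]; exact hEτ
    have hv2 : tl a ℓ (φ m2) =
        (mquad (seg a ℓ (φ m1 + 1))).1.1 / (mquad (seg a ℓ (φ m1 + 1))).2.1 := by
      rw [hT2, hq1, hq3]
    have hq1ne : (mquad (seg a ℓ (φ m1 + 1))).2.1 ≠ 0 := by rw [hq3]; exact hqne2
    have heq := hv1.symm.trans hv2
    rw [div_eq_div_iff hDτ hq1ne] at heq
    have hdet0 : (mquad (seg a ℓ (φ m1 + 1))).1.1 * (mquad (seg a ℓ (φ m1 + 1))).2.2 -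
        (mquad (seg a ℓ (φ m1 + 1))).1.2 * (mquad (seg a ℓ (φ m1 + 1))).2.1 = 0 := by
      linear_combination -heq
    have := mquad_det_norm (seg a ℓ (φ m1 + 1))
    rw [hdet0, norm_zero] at this
    norm_num at this
  rcases hne.lt_or_gt with h | h
  · exact final m1 m2 hm1 hm2 h hFeq
  · exact final m2 m1 hm2 hm1 h hFeq.symm

end CFAux2

namespace CFAux2
open CFAux CFAux.Ctx Filter Topology

/-- Step lemma for the case `0 ∈ V0` (trapped case). -/
lemma caseT_step (X : Ctx) (h0V : (0:ℂ) ∈ X.V0) (a b : ℕ → ℂ)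
    (haO : ∀ i, a i ∈ X.Oset) (hbO : ∀ i, b i ∈ X.Oset)
    (hgoodA : ∀ i, 1 ≤ i → X.Good (a i)) (hgoodB : ∀ i, 1 ≤ i → X.Good (b i))
    (k : ℕ) (γ : ℂ)
    (ha : Tendsto (fun n => tl a k n) atTop (nhds γ))
    (hb : Tendsto (fun n => tl b k n) atTop (nhds γ)) :
    a k = b k ∧ ∃ γ' : ℂ, Tendsto (fun n => tl a (k+1) n) atTop (nhds γ') ∧
      Tendsto (fun n => tl b (k+1) n) atTop (nhds γ') := by
  have segGoodA : ∀ i n, 1 ≤ i → ∀ x ∈ seg a i n, X.Good x := by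
    intro i n hi x hx
    obtain ⟨kk, hk1, _, rfl⟩ := mem_seg hx
    exact hgoodA kk (by omega)
  have segGoodB : ∀ i n, 1 ≤ i → ∀ x ∈ seg b i n, X.Good x := by
    intro i n hi x hx
    obtain ⟨kk, hk1, _, rfl⟩ := mem_seg hx
    exact hgoodB kk (by omega)
  have trapInvA : ∀ j n, 1 ≤ j → j ≤ n → (tl a j n)⁻¹ ∈ X.W := by
    intro j n hj hjn
    exact (X.trap (seg a j n) (a n) (segGoodA j n hj)
      ⟨a n, hgoodA n (by omega), by simpa using h0V⟩).1
  have trapInvB : ∀ j n, 1 ≤ j → j ≤ n → (tl b j n)⁻¹ ∈ X.W := by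
    intro j n hj hjn
    exact (X.trap (seg b j n) (b n) (segGoodB j n hj)
      ⟨b n, hgoodB n (by omega), by simpa using h0V⟩).1
  have hsubA : ∀ n, k < n → tl a k n - a k = (tl a (k+1) n)⁻¹ := by
    intro n hn
    rw [tl_cons a hn]
    ring
  have hsubB : ∀ n, k < n → tl b k n - b k = (tl b (k+1) n)⁻¹ := by
    intro n hn
    rw [tl_cons b hn]
    ring
  have hWa : γ - a k ∈ X.W := by
    refine X.Wclosed.mem_of_tendsto (ha.sub_const (a k)) ?_
    refine eventually_atTop.2 ⟨k+1, fun n hn => ?_⟩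
    rw [hsubA n (by omega)]
    exact trapInvA (k+1) n (by omega) hn
  have hWb : γ - b k ∈ X.W := by
    refine X.Wclosed.mem_of_tendsto (hb.sub_const (b k)) ?_
    refine eventually_atTop.2 ⟨k+1, fun n hn => ?_⟩
    rw [hsubB n (by omega)]
    exact trapInvB (k+1) n (by omega) hn
  have hab : a k = b k := by
    by_contra hne
    exact X.hdisjpt (a k) (haO k) (b k) (hbO k) hne γ (X.WsubU hWa) (X.WsubU hWb)
  have hne0 : γ - a k ≠ 0 := by
    intro h0
    have hz : Tendsto (fun n => (tl a (k+1) n)⁻¹) atTop (nhds 0) := by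
      rw [← h0]
      refine (ha.sub_const (a k)).congr' ?_
      exact eventually_atTop.2 ⟨k+1, fun n hn => hsubA n (by omega)⟩
    set K : ℝ := ‖a (k+1)‖ + X.Rb + 1 with hK
    have hKpos : 0 < K := by
      have := norm_nonneg (a (k+1))
      have := X.Rbpos
      simp only [hK]
      linarith
    have hbound : ∀ n, k+2 ≤ n → ‖tl a (k+1) n‖ ≤ K := by
      intro n hn
      have h1 : tl a (k+1) n = a (k+1) + (tl a (k+2) n)⁻¹ := tl_cons a (by omega)
      have h2 : (tl a (k+2) n)⁻¹ ∈ X.W := trapInvA (k+2) n (by omega) hn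
      have h3 : ‖(tl a (k+2) n)⁻¹‖ ≤ X.Rb := X.hRb _ (interior_subset (X.WsubU h2))
      rw [h1]
      calc ‖a (k+1) + (tl a (k+2) n)⁻¹‖ ≤ ‖a (k+1)‖ + ‖(tl a (k+2) n)⁻¹‖ := norm_add_le _ _
      _ ≤ K := by simp only [hK]; linarith
    have hev0 : ∀ᶠ n in atTop, ‖(tl a (k+1) n)⁻¹‖ < K⁻¹ := by
      have h4 := tendsto_zero_iff_norm_tendsto_zero.1 hz
      obtain ⟨N, hN⟩ := (Metric.tendsto_atTop.1 h4) K⁻¹ (by positivity)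
      refine eventually_atTop.2 ⟨N, fun n hn => ?_⟩
      have h5 := hN n hn
      rw [Real.dist_eq, sub_zero, abs_of_nonneg (norm_nonneg _)] at h5
      exact h5
    obtain ⟨N, hN⟩ := eventually_atTop.1 hev0
    have hzero : ∀ n, max N (k+2) ≤ n → tl a (k+1) n = 0 := by
      intro n hn
      by_contra hne'
      have h5 := hN n (le_trans (le_max_left _ _) hn)
      have h6 := hbound n (le_trans (le_max_right _ _) hn)
      have h7 : 0 < ‖tl a (k+1) n‖ := norm_pos_iff.2 hne'
      rw [norm_inv] at h5
      have h9 := mul_lt_mul_of_pos_right h5 (mul_pos h7 hKpos)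
      rw [inv_mul_cancel_left₀ (ne_of_gt h7)] at h9
      rw [mul_comm ‖tl a (k+1) n‖ K, inv_mul_cancel_left₀ (ne_of_gt hKpos)] at h9
      linarith
    have heq : tl a (k+1) (max N (k+2)) = tl a (k+1) (max N (k+2) + 1) := by
      rw [hzero _ le_rfl, hzero _ (by omega)]
    exact stag X a hgoodA (by omega)
      (show k+1 ≤ max N (k+2) by have := le_max_right N (k+2); omega) heq
  have hne0b : γ - b k ≠ 0 := by rwa [hab] at hne0
  refine ⟨hab, (γ - a k)⁻¹, ?_, ?_⟩
  · have h1 := (ha.sub_const (a k)).inv₀ hne0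
    refine h1.congr' ?_
    refine eventually_atTop.2 ⟨k+1, fun n hn => ?_⟩
    exact (tl_succ_eq a (show k < n by omega)).symm
  · have h1 := (hb.sub_const (b k)).inv₀ hne0b
    have h2 : (γ - b k)⁻¹ = (γ - a k)⁻¹ := by rw [hab]
    rw [← h2]
    refine h1.congr' ?_
    refine eventually_atTop.2 ⟨k+1, fun n hn => ?_⟩
    exact (tl_succ_eq b (show k < n by omega)).symm

/-- Step lemma for the case `0 ∉ V0` (pseudo-convergent case). -/
lemma caseM_step (X : Ctx) (f : ℂ) (hfO : f ∈ X.Oset) (hfV : -f ∈ X.V0) (hf0 : f ≠ 0)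
    (h0V : (0:ℂ) ∉ X.V0) (a b : ℕ → ℂ)
    (haO : ∀ i, a i ∈ X.Oset) (hbO : ∀ i, b i ∈ X.Oset)
    (hgoodA : ∀ i, 1 ≤ i → X.Good (a i)) (hgoodB : ∀ i, 1 ≤ i → X.Good (b i))
    (φa φb : ℕ → ℕ) (hφa : StrictMono φa) (hφb : StrictMono φb)
    (hzfa : ∀ m j, 1 ≤ j → j ≤ φa m → tl a j (φa m) ≠ 0)
    (hzfb : ∀ m j, 1 ≤ j → j ≤ φb m → tl b j (φb m) ≠ 0)
    (k : ℕ) (γ : ℂ)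
    (ha : Tendsto (fun m => tl a k (φa m)) atTop (nhds γ))
    (hb : Tendsto (fun m => tl b k (φb m)) atTop (nhds γ)) :
    a k = b k ∧ ∃ γ' : ℂ, Tendsto (fun m => tl a (k+1) (φa m)) atTop (nhds γ') ∧
      Tendsto (fun m => tl b (k+1) (φb m)) atTop (nhds γ') := by
  have hshift : StrictMono (fun m : ℕ => m + (k+3)) := fun x y h => by
    simpa using Nat.add_lt_add_right h (k+3)
  have keyW : ∀ (u : ℕ → ℂ), (∀ i, u i ∈ X.Oset) → (∀ i, 1 ≤ i → X.Good (u i)) →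
      ∀ (φ : ℕ → ℕ), StrictMono φ → (∀ m j, 1 ≤ j → j ≤ φ m → tl u j (φ m) ≠ 0) →
      ∀ (δ : ℂ), Tendsto (fun m => tl u k (φ m)) atTop (nhds δ) →
      (δ - u k ∈ X.W ∧ (δ - u k = 0 → False)) := by
    intro u huO hugood φ hφ huzf δ hu
    set ψ : ℕ → ℕ := fun m => φ (m + (k+3)) with hψdef
    have hψmono : StrictMono ψ := hφ.comp hshift
    have hψge : ∀ m, m + (k+3) ≤ ψ m := fun m => hφ.le_apply
    have hψzf : ∀ m j, 1 ≤ j → j ≤ ψ m → tl u j (ψ m) ≠ 0 := fun m => huzf (m + (k+3))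
    have hψconv : Tendsto (fun m => tl u k (ψ m)) atTop (nhds δ) :=
      hu.comp (tendsto_add_atTop_nat (k+3))
    have hWu : δ - u k ∈ X.W :=
      mainA X u f hfO hfV hf0 h0V huO hugood k ψ hψmono
        (fun m => by have := hψge m; omega) hψzf δ hψconv
    refine ⟨hWu, ?_⟩
    intro h0
    have hxinv : Tendsto (fun m => (tl u (k+1) (ψ m))⁻¹) atTop (nhds 0) := by
      rw [← h0]
      refine (hψconv.sub_const (u k)).congr (fun m => ?_)
      rw [tl_succ_eq u (show k < ψ m by have := hψge m; omega), inv_inv]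
    have hxne : ∀ m, tl u (k+1) (ψ m) ≠ 0 := fun m =>
      hψzf m (k+1) (by omega) (by have := hψge m; omega)
    have hxnorm : Tendsto (fun m => ‖tl u (k+1) (ψ m)‖) atTop atTop := by
      have h1 : Tendsto (fun m => ‖(tl u (k+1) (ψ m))⁻¹‖) atTop (nhds 0) :=
        tendsto_zero_iff_norm_tendsto_zero.1 hxinv
      have h2 : Tendsto (fun m => ‖(tl u (k+1) (ψ m))⁻¹‖) atTop (nhdsWithin 0 (Set.Ioi 0)) := by
        rw [tendsto_nhdsWithin_iff]
        exact ⟨h1, Eventually.of_forall (fun m => norm_pos_iff.2 (inv_ne_zero (hxne m)))⟩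
      have h3 := tendsto_inv_nhdsGT_zero.comp h2
      refine h3.congr (fun m => ?_)
      simp only [Function.comp_apply, norm_inv, inv_inv]
    have hyinv : ∀ m, (tl u (k+2) (ψ m))⁻¹ = tl u (k+1) (ψ m) - u (k+1) := by
      intro m
      rw [tl_succ_eq u (show k+1 < ψ m by have := hψge m; omega), inv_inv]
    have hyinvnorm : Tendsto (fun m => ‖(tl u (k+2) (ψ m))⁻¹‖) atTop atTop := by
      have hlow : ∀ m, ‖tl u (k+1) (ψ m)‖ - ‖u (k+1)‖ ≤ ‖(tl u (k+2) (ψ m))⁻¹‖ := by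
        intro m
        rw [hyinv m]
        exact norm_sub_norm_le _ _
      have hup : Tendsto (fun m => ‖tl u (k+1) (ψ m)‖ - ‖u (k+1)‖) atTop atTop := by
        have := tendsto_atTop_add_const_right atTop (-‖u (k+1)‖) hxnorm
        refine this.congr (fun m => ?_)
        ring
      exact tendsto_atTop_mono hlow hup
    have hy0 : Tendsto (fun m => tl u (k+2) (ψ m)) atTop (nhds 0) := by
      rw [tendsto_zero_iff_norm_tendsto_zero]
      have h4 := tendsto_inv_atTop_zero.comp hyinvnorm
      refine h4.congr (fun m => ?_)
      simp only [Function.comp_apply, norm_inv, inv_inv]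
    have hWneg := mainA X u f hfO hfV hf0 h0V huO hugood (k+2) ψ hψmono
      (fun m => by have := hψge m; omega) hψzf 0 hy0
    have hmem : -u (k+2) ∈ interior X.V0 := X.WsubU (by simpa using hWneg)
    exact X.neg_good_not_interior (hugood (k+2) (by omega)) hmem
  obtain ⟨hWa, hne0a'⟩ := keyW a haO hgoodA φa hφa hzfa γ ha
  obtain ⟨hWb, hne0b'⟩ := keyW b hbO hgoodB φb hφb hzfb γ hb
  have hab : a k = b k := by
    by_contra hne
    exact X.hdisjpt (a k) (haO k) (b k) (hbO k) hne γ (X.WsubU hWa) (X.WsubU hWb)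
  have hne0 : γ - a k ≠ 0 := fun h => hne0a' h
  have hne0b : γ - b k ≠ 0 := fun h => hne0b' h
  refine ⟨hab, (γ - a k)⁻¹, ?_, ?_⟩
  · have h1 := (ha.sub_const (a k)).inv₀ hne0
    refine h1.congr' ?_
    refine eventually_atTop.2 ⟨k+1, fun m hm => ?_⟩
    have hk : k < φa m := by have h2 : m ≤ φa m := hφa.le_apply; omega
    exact (tl_succ_eq a hk).symm
  · have h1 := (hb.sub_const (b k)).inv₀ hne0b
    have h2 : (γ - b k)⁻¹ = (γ - a k)⁻¹ := by rw [hab]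
    rw [← h2]
    refine h1.congr' ?_
    refine eventually_atTop.2 ⟨k+1, fun m hm => ?_⟩
    have hk : k < φb m := by have h2 : m ≤ φb m := hφb.le_apply; omega
    exact (tl_succ_eq b hk).symm

end CFAux2


open CFAux CFAux.Ctx CFAux2

/-- With `𝒪` the ring of integers of an imaginary quadratic field embedded in
`ℂ`, `V₀` a compact closed fundamental domain for translation by `𝒪` with
interior `U₀`, and `M = {c ∈ 𝒪 : c + V₀ ⊄ U₀⁻¹}`: every `α ∈ ℂ` has at most
one expression as a convergent infinite continued fraction `[c₀, c₁, …]` with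
all `cᵢ ∈ 𝒪` and `cᵢ ∉ M` for `i ≥ 1`. -/
theorem stmt6 (K : Type) [Field K] [NumberField K]
    (hdeg : Module.finrank ℚ K = 2)
    (ι : K →+* ℂ) (him : ∃ x : K, (ι x).im ≠ 0)
    (Oset : Set ℂ)
    (hO : Oset = Set.range fun x : NumberField.RingOfIntegers K =>
      ι (algebraMap (NumberField.RingOfIntegers K) K x))
    (V0 : Set ℂ) (hV0closed : IsClosed V0) (hV0cpt : IsCompact V0)
    (hcover : ∀ z : ℂ, ∃ c ∈ Oset, z ∈ (fun w => c + w) '' V0)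
    (hdisj : ∀ c₁ ∈ Oset, ∀ c₂ ∈ Oset, c₁ ≠ c₂ →
      Disjoint (interior ((fun w => c₁ + w) '' V0))
        (interior ((fun w => c₂ + w) '' V0)))
    (hW : ∃ W : Set ℂ, IsClosed W ∧ W ⊆ interior V0 ∧
      ∀ c ∈ Oset, ((fun w => c + w) '' V0 ⊆ {x : ℂ | x⁻¹ ∈ interior V0}) →
        ∀ z ∈ (fun w => c + w) '' V0, z⁻¹ ∈ W)
    (α : ℂ) (c d : ℕ → ℂ)
    (hcO : ∀ i, c i ∈ Oset) (hdO : ∀ i, d i ∈ Oset)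
    (hcM : ∀ i, 1 ≤ i → (fun w => c i + w) '' V0 ⊆ {x : ℂ | x⁻¹ ∈ interior V0})
    (hdM : ∀ i, 1 ≤ i → (fun w => d i + w) '' V0 ⊆ {x : ℂ | x⁻¹ ∈ interior V0})
    (hcα : Tendsto (fun n => cfC (List.ofFn fun i : Fin (n+1) => c i)) atTop (nhds α))
    (hdα : Tendsto (fun n => cfC (List.ofFn fun i : Fin (n+1) => d i)) atTop (nhds α)) :
    c = d := by
  classical
  obtain ⟨W, hWclosed, hWU, hWprop⟩ := hW
  -- ring structure of Oset
  have h0O : (0:ℂ) ∈ Oset := by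
    rw [hO]; exact ⟨0, by simp⟩
  have h1O : (1:ℂ) ∈ Oset := by
    rw [hO]; exact ⟨1, by simp⟩
  have hsubO : ∀ {x y : ℂ}, x ∈ Oset → y ∈ Oset → x - y ∈ Oset := by
    intro x y hx hy
    rw [hO] at hx hy ⊢
    obtain ⟨x', hx'⟩ := hx
    obtain ⟨y', hy'⟩ := hy
    refine ⟨x' - y', ?_⟩
    show ι ((algebraMap (NumberField.RingOfIntegers K) K) (x' - y')) = x - y
    rw [map_sub, map_sub]
    rw [show ι ((algebraMap (NumberField.RingOfIntegers K) K) x') = x from hx',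
        show ι ((algebraMap (NumberField.RingOfIntegers K) K) y') = y from hy']
  have haddO : ∀ {x y : ℂ}, x ∈ Oset → y ∈ Oset → x + y ∈ Oset := by
    intro x y hx hy
    rw [hO] at hx hy ⊢
    obtain ⟨x', hx'⟩ := hx
    obtain ⟨y', hy'⟩ := hy
    refine ⟨x' + y', ?_⟩
    show ι ((algebraMap (NumberField.RingOfIntegers K) K) (x' + y')) = x + y
    rw [map_add, map_add]
    rw [show ι ((algebraMap (NumberField.RingOfIntegers K) K) x') = x from hx',
        show ι ((algebraMap (NumberField.RingOfIntegers K) K) y') = y from hy']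
  have hmulO : ∀ {x y : ℂ}, x ∈ Oset → y ∈ Oset → x * y ∈ Oset := by
    intro x y hx hy
    rw [hO] at hx hy ⊢
    obtain ⟨x', hx'⟩ := hx
    obtain ⟨y', hy'⟩ := hy
    refine ⟨x' * y', ?_⟩
    show ι ((algebraMap (NumberField.RingOfIntegers K) K) (x' * y')) = x * y
    rw [map_mul, map_mul]
    rw [show ι ((algebraMap (NumberField.RingOfIntegers K) K) x') = x from hx',
        show ι ((algebraMap (NumberField.RingOfIntegers K) K) y') = y from hy']
  -- interior of translates
  have hint : ∀ (t : ℂ) (s : Set ℂ),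
      interior ((fun w => t + w) '' s) = (fun w => t + w) '' interior s := by
    intro t s
    apply subset_antisymm
    · intro z hz
      refine ⟨z - t, ?_, by ring⟩
      have h1 : IsOpen ((fun w => t + w) ⁻¹' interior ((fun w => t + w) '' s)) :=
        isOpen_interior.preimage (continuous_add_left t)
      have h3 : (fun w => t + w) ⁻¹' interior ((fun w => t + w) '' s) ⊆ s := by
        intro w hw
        obtain ⟨v, hv, hev⟩ := interior_subset (Set.mem_preimage.1 hw)
        have hvw : v = w := by
          have : t + v = t + w := hev
          exact add_left_cancel this
        rwa [← hvw]
      have h2 : z - t ∈ (fun w => t + w) ⁻¹' interior ((fun w => t + w) '' s) := by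
        simp only [Set.mem_preimage]
        rw [show t + (z - t) = z by ring]
        exact hz
      exact interior_maximal h3 h1 h2
    · exact (isOpenMap_add_left t).image_interior_subset s
  -- point forms
  have hdisjpt : ∀ c₁, c₁ ∈ Oset → ∀ c₂, c₂ ∈ Oset → c₁ ≠ c₂ →
      ∀ z, z - c₁ ∈ interior V0 → z - c₂ ∈ interior V0 → False := by
    intro c1 h1 c2 h2 hne z hz1 hz2
    have m1 : z ∈ interior ((fun w => c1 + w) '' V0) := by
      rw [hint]; exact ⟨z - c1, hz1, by ring⟩
    have m2 : z ∈ interior ((fun w => c2 + w) '' V0) := by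
      rw [hint]; exact ⟨z - c2, hz2, by ring⟩
    exact Set.disjoint_left.1 (hdisj c1 h1 c2 h2 hne) m1 m2
  have hWpt : ∀ cc, cc ∈ Oset → (∀ v ∈ V0, (cc + v)⁻¹ ∈ interior V0) →
      ∀ z, z - cc ∈ V0 → z⁻¹ ∈ W := by
    intro cc hcc hgd z hzV
    refine hWprop cc hcc ?_ z ⟨z - cc, hzV, by ring⟩
    rintro x ⟨v, hv, rfl⟩
    exact hgd v hv
  -- nonemptiness and basic data
  obtain ⟨e, heO, himg0⟩ := hcover 0
  obtain ⟨v0, hv0, hev0⟩ := himg0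
  have hev0' : e + v0 = 0 := hev0
  -- bound
  obtain ⟨r, hr⟩ := hV0cpt.isBounded.subset_closedBall 0
  have hRb : ∀ x ∈ V0, ‖x‖ ≤ max r 0 := by
    intro x hx
    have := hr hx
    rw [Metric.mem_closedBall, dist_zero_right] at this
    exact le_trans this (le_max_left _ _)
  -- discreteness
  have hgdc1 : ∀ v ∈ V0, (c 1 + v)⁻¹ ∈ interior V0 := fun v hv => hcM 1 le_rfl ⟨v, hv, rfl⟩
  have hu0W : (c 1 + v0)⁻¹ ∈ W := by
    refine hWpt (c 1) (hcO 1) hgdc1 (c 1 + v0) ?_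
    rw [show c 1 + v0 - c 1 = v0 by ring]
    exact hv0
  have hu0U : (c 1 + v0)⁻¹ ∈ interior V0 := hWU hu0W
  obtain ⟨ε₀, hε₀pos, hball₀⟩ := Metric.isOpen_iff.1 isOpen_interior _ hu0U
  have hm0sep : ∀ x ∈ Oset, x ≠ 0 → ε₀ ≤ ‖x‖ := by
    intro x hx hxne
    by_contra hlt
    push_neg at hlt
    have hmem1 : x + (c 1 + v0)⁻¹ ∈ interior V0 := by
      apply hball₀
      rw [Metric.mem_ball, dist_eq_norm]
      rw [show x + (c 1 + v0)⁻¹ - (c 1 + v0)⁻¹ = x by ring]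
      exact hlt
    refine hdisjpt x hx 0 h0O hxne (x + (c 1 + v0)⁻¹) ?_ ?_
    · rw [show x + (c 1 + v0)⁻¹ - x = (c 1 + v0)⁻¹ by ring]
      exact hu0U
    · rw [sub_zero]
      exact hmem1
  -- the context
  set X : Ctx := {
    V0 := V0, Oset := Oset, W := W,
    cpt := hV0cpt, nev := ⟨v0, hv0⟩,
    OsetZero := h0O, OsetSub := fun hx hy => hsubO hx hy,
    OsetAdd := fun hx hy => haddO hx hy, OsetMul := fun hx hy => hmulO hx hy,
    OsetOne := h1O,
    Wclosed := hWclosed, WsubU := hWU,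
    hWpt := hWpt, hdisjpt := hdisjpt,
    m0 := ε₀, m0pos := hε₀pos, m0sep := hm0sep,
    Rb := max r 0, Rbpos := le_max_right _ _, hRb := hRb } with hXdef
  have hgoodcX : ∀ i, 1 ≤ i → X.Good (c i) :=
    fun i hi => ⟨hcO i, fun v hv => hcM i hi ⟨v, hv, rfl⟩⟩
  have hgooddX : ∀ i, 1 ≤ i → X.Good (d i) :=
    fun i hi => ⟨hdO i, fun v hv => hdM i hi ⟨v, hv, rfl⟩⟩
  -- convergence bridges
  have hcα' : Tendsto (fun n => tl c 0 n) atTop (nhds α) := by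
    have he : (fun n => cfC (List.ofFn fun i : Fin (n+1) => c i)) = fun n => tl c 0 n :=
      funext (fun n => cfC_ofFn c n)
    rwa [he] at hcα
  have hdα' : Tendsto (fun n => tl d 0 n) atTop (nhds α) := by
    have he : (fun n => cfC (List.ofFn fun i : Fin (n+1) => d i)) = fun n => tl d 0 n :=
      funext (fun n => cfC_ofFn d n)
    rwa [he] at hdα
  by_cases h0V : (0:ℂ) ∈ V0
  · -- trapped case
    have all : ∀ k, ∃ γ : ℂ, Tendsto (fun n => tl c k n) atTop (nhds γ) ∧
        Tendsto (fun n => tl d k n) atTop (nhds γ) := by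
      intro k
      induction k with
      | zero => exact ⟨α, hcα', hdα'⟩
      | succ k ih =>
          obtain ⟨γ, h1, h2⟩ := ih
          exact (caseT_step X h0V c d hcO hdO hgoodcX hgooddX k γ h1 h2).2
    funext k
    obtain ⟨γ, h1, h2⟩ := all k
    exact (caseT_step X h0V c d hcO hdO hgoodcX hgooddX k γ h1 h2).1
  · -- pseudo-convergent case
    have hfV : -e ∈ V0 := by
      rw [neg_eq_of_add_eq_zero_right hev0']
      exact hv0
    have hf0 : e ≠ 0 := by
      intro h
      have h2 := hev0'
      rw [h, zero_add] at h2
      rw [h2] at hv0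
      exact h0V hv0
    -- choose zero-free depths
    have hexc := zf_infinite X c hgoodcX hcα'
    have hexd := zf_infinite X d hgooddX hdα'
    choose gc hgc1 hgc2 hgc3 using hexc
    choose gd hgd1 hgd2 hgd3 using hexd
    obtain ⟨φc, hφc0, hφcs⟩ : ∃ φ : ℕ → ℕ, φ 0 = gc 1 ∧ ∀ m, φ (m+1) = gc (φ m + 1) :=
      ⟨fun m => Nat.rec (gc 1) (fun _ prev => gc (prev + 1)) m, rfl, fun m => rfl⟩
    obtain ⟨φd, hφd0, hφds⟩ : ∃ φ : ℕ → ℕ, φ 0 = gd 1 ∧ ∀ m, φ (m+1) = gd (φ m + 1) :=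
      ⟨fun m => Nat.rec (gd 1) (fun _ prev => gd (prev + 1)) m, rfl, fun m => rfl⟩
    have hφcmono : StrictMono φc := by
      apply strictMono_nat_of_lt_succ
      intro m
      rw [hφcs m]
      have := hgc1 (φc m + 1)
      omega
    have hφdmono : StrictMono φd := by
      apply strictMono_nat_of_lt_succ
      intro m
      rw [hφds m]
      have := hgd1 (φd m + 1)
      omega
    have hzfc : ∀ m j, 1 ≤ j → j ≤ φc m → tl c j (φc m) ≠ 0 := by
      intro m
      cases m with
      | zero => rw [hφc0]; exact hgc3 1
      | succ m => rw [hφcs m]; exact hgc3 _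
    have hzfd : ∀ m j, 1 ≤ j → j ≤ φd m → tl d j (φd m) ≠ 0 := by
      intro m
      cases m with
      | zero => rw [hφd0]; exact hgd3 1
      | succ m => rw [hφds m]; exact hgd3 _
    have all : ∀ k, ∃ γ : ℂ, Tendsto (fun m => tl c k (φc m)) atTop (nhds γ) ∧
        Tendsto (fun m => tl d k (φd m)) atTop (nhds γ) := by
      intro k
      induction k with
      | zero => exact ⟨α, hcα'.comp hφcmono.tendsto_atTop, hdα'.comp hφdmono.tendsto_atTop⟩
      | succ k ih =>
          obtain ⟨γ, h1, h2⟩ := ih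
          exact (caseM_step X e heO hfV hf0 h0V c d hcO hdO hgoodcX hgooddX
            φc φd hφcmono hφdmono hzfc hzfd k γ h1 h2).2
    funext k
    obtain ⟨γ, h1, h2⟩ := all k
    exact (caseM_step X e heO hfV hf0 h0V c d hcO hdO hgoodcX hgooddX
      φc φd hφcmono hφdmono hzfc hzfd k γ h1 h2).1
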